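/- The map from N-classes of binary cubic forms with x³-coefficient −1 to N_{1/3}-classes is injective: if two binary cubic forms −x³ + b x²y + c xy² + d y³ and −x³ + b' x²y + c' xy² + d' y³ with integer coefficients are related by the action of a lower-triangular unipotent matrix [[1,0],[k/3,1]] with k ∈ ℤ, then 3 divides k (hence they are already N-equivalent). -/
import Mathlib

/-- Injectivity of the map from `N`-classes of binary cubic forms with `x³`-coefficient `−1` to
`N_{1/3}`-classes: if the cubic forms `−x³ + b x²y + c xy² + d y³` and
`−x³ + b' x²y + c' xy² + d' y³` (all coefficients integers) are related by the action of the
unipotent matrix `[[1,0],[k/3,1]]` with `k ∈ ℤ`, i.e.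
`−(x + (k/3)y)³ + b(x + (k/3)y)²y + c(x + (k/3)y)y² + dy³ = −x³ + b'x²y + c'xy² + d'y³`,
then `3 ∣ k`. -/
theorem N_to_N_third_injective (b c d b' c' d' k : ℤ)
    (h : ∀ x y : ℚ,
      -(x + ((k:ℚ)/3)*y)^3 + (b:ℚ)*(x + ((k:ℚ)/3)*y)^2*y
        + (c:ℚ)*(x + ((k:ℚ)/3)*y)*y^2 + (d:ℚ)*y^3
      = -x^3 + (b':ℚ)*x^2*y + (c':ℚ)*x*y^2 + (d':ℚ)*y^3) :
    (3 : ℤ) ∣ k := by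
  have h01 := h 0 1
  have hq : (k : ℚ)^3 = 3 * (b * k^2 + 3 * c * k + 9 * (d - d')) := by
    field_simp at h01
    linarith [h01]
  have hz : k^3 = 3 * (b * k^2 + 3 * c * k + 9 * (d - d')) := by
    exact_mod_cast hq
  have h3 : (3 : ℤ) ∣ k^3 := ⟨_, hz⟩
  exact Int.Prime.dvd_pow' (by norm_num) h3
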